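/- Let m > 0, c > 3m, a² = (1-3m/c)/sqrt(1-2m/c), and define u(r)² = r²/((1-2m/r)·ν₊(r)²) for r ≥ c, where ν₊ satisfies ν₊(c)² = c²/((1-3m/c)sqrt(1-2m/c)) and (ν₊²)'(r) = 2r/(1-2m/r)^{3/2}. Then a² ≤ u(r)² ≤ 1 for all r ≥ c. -/

import Mathlib

/-- Comparison lemma: if `f c ≤ g c` and `f' ≤ g'` on `[c, ∞)`, then `f ≤ g` on `[c, ∞)`. -/
lemma le_of_deriv_le_aux {c : ℝ} {f g f' g' : ℝ → ℝ}
    (hf : ∀ x, c ≤ x → HasDerivAt f (f' x) x)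
    (hg : ∀ x, c ≤ x → HasDerivAt g (g' x) x)
    (hle : ∀ x, c ≤ x → f' x ≤ g' x)
    (h0 : f c ≤ g c) {r : ℝ} (hr : c ≤ r) : f r ≤ g r := by
  have hmono : MonotoneOn (fun x => g x - f x) (Set.Ici c) := by
    apply monotoneOn_of_hasDerivWithinAt_nonneg (convex_Ici c)
      (f' := fun x => g' x - f' x)
    · intro x hx
      exact (((hg x hx).sub (hf x hx)).continuousAt).continuousWithinAt
    · intro x hx
      rw [interior_Ici] at hx
      exact (((hg x hx.le).sub (hf x hx.le))).hasDerivWithinAt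
    · intro x hx
      rw [interior_Ici] at hx
      have := hle x hx.le
      linarith
  have := hmono (Set.self_mem_Ici) (Set.mem_Ici.2 hr) hr
  simp only at this
  linarith

set_option maxHeartbeats 1600000 in
theorem warping_function_bounds (m c : ℝ) (hm : 0 < m) (hc : 3 * m < c)
    (ν : ℝ → ℝ)
    (hν0 : (ν c) ^ 2 = c ^ 2 / ((1 - 3 * m / c) * Real.sqrt (1 - 2 * m / c)))
    (hν' : ∀ r : ℝ, c ≤ r →
      HasDerivAt (fun x => (ν x) ^ 2) (2 * r / (1 - 2 * m / r) ^ ((3:ℝ)/2)) r)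
    (r : ℝ) (hr : c ≤ r) :
    (1 - 3 * m / c) / Real.sqrt (1 - 2 * m / c) ≤ r ^ 2 / ((1 - 2 * m / r) * (ν r) ^ 2) ∧
      r ^ 2 / ((1 - 2 * m / r) * (ν r) ^ 2) ≤ 1 := by
  have hc0 : 0 < c := lt_trans (by linarith) hc
  -- basic positivity facts at a general point x ≥ c
  have hx0 : ∀ x : ℝ, c ≤ x → 0 < x := fun x hx => lt_of_lt_of_le hc0 hx
  have hsx : ∀ x : ℝ, c ≤ x → 0 < 1 - 3 * m / x := by
    intro x hx
    have hx0 := hx0 x hx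
    rw [sub_pos, div_lt_one hx0]; linarith
  have htx : ∀ x : ℝ, c ≤ x → 0 < 1 - 2 * m / x := by
    intro x hx
    have hx0 := hx0 x hx
    rw [sub_pos, div_lt_one hx0]; linarith
  have hwx : ∀ x : ℝ, c ≤ x → 0 < Real.sqrt (1 - 2 * m / x) := by
    intro x hx; exact Real.sqrt_pos.2 (htx x hx)
  have hw2 : ∀ x : ℝ, c ≤ x → (Real.sqrt (1 - 2 * m / x)) ^ 2 = 1 - 2 * m / x := by
    intro x hx; exact Real.sq_sqrt (htx x hx).le
  -- abbreviations at c
  set A : ℝ := (1 - 3 * m / c) / Real.sqrt (1 - 2 * m / c) with hA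
  have hA0 : 0 < A := div_pos (hsx c le_rfl) (hwx c le_rfl)
  -- rpow to sqrt conversion
  have hrpow : ∀ x : ℝ, c ≤ x →
      (1 - 2 * m / x) ^ ((3:ℝ)/2) = (1 - 2 * m / x) * Real.sqrt (1 - 2 * m / x) := by
    intro x hx
    rw [show (3:ℝ)/2 = 1 + 1/2 by norm_num, Real.rpow_add (htx x hx), Real.rpow_one,
      Real.sqrt_eq_rpow]
  -- derivative of the inner functions
  have hdt : ∀ x : ℝ, c ≤ x → HasDerivAt (fun y : ℝ => 1 - 2 * m / y) (2 * m / x ^ 2) x := by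
    intro x hx
    have hx0 := (hx0 x hx).ne'
    have h1 : HasDerivAt (fun y : ℝ => 2 * m * y⁻¹) (2 * m * (-(x ^ 2)⁻¹)) x :=
      (hasDerivAt_inv hx0).const_mul (2 * m)
    have h2 := h1.const_sub 1
    have h3 : HasDerivAt (fun y : ℝ => 1 - 2 * m * y⁻¹) (2 * m / x ^ 2) x := by
      exact h2.congr_deriv (by ring)
    simpa only [div_eq_mul_inv] using h3
  have hds : ∀ x : ℝ, c ≤ x → HasDerivAt (fun y : ℝ => 1 - 3 * m / y) (3 * m / x ^ 2) x := by
    intro x hx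
    have hx0 := (hx0 x hx).ne'
    have h1 : HasDerivAt (fun y : ℝ => 3 * m * y⁻¹) (3 * m * (-(x ^ 2)⁻¹)) x :=
      (hasDerivAt_inv hx0).const_mul (3 * m)
    have h2 := h1.const_sub 1
    have h3 : HasDerivAt (fun y : ℝ => 1 - 3 * m * y⁻¹) (3 * m / x ^ 2) x := by
      exact h2.congr_deriv (by ring)
    simpa only [div_eq_mul_inv] using h3
  have hdw : ∀ x : ℝ, c ≤ x → HasDerivAt (fun y : ℝ => Real.sqrt (1 - 2 * m / y))
      ((2 * m / x ^ 2) / (2 * Real.sqrt (1 - 2 * m / x))) x := by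
    intro x hx
    exact (hdt x hx).sqrt (htx x hx).ne'
  -- the lower comparison function φ
  set φ : ℝ → ℝ := fun x => x ^ 2 / ((1 - 3 * m / x) * Real.sqrt (1 - 2 * m / x)) with hφdef
  have hdφ : ∀ x : ℝ, c ≤ x → HasDerivAt φ
      ((2 * x * ((1 - 3 * m / x) * Real.sqrt (1 - 2 * m / x)) -
        x ^ 2 * (3 * m / x ^ 2 * Real.sqrt (1 - 2 * m / x) +
          (1 - 3 * m / x) * ((2 * m / x ^ 2) / (2 * Real.sqrt (1 - 2 * m / x))))) /
        ((1 - 3 * m / x) * Real.sqrt (1 - 2 * m / x)) ^ 2) x := by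
    intro x hx
    have hden : HasDerivAt (fun y : ℝ => (1 - 3 * m / y) * Real.sqrt (1 - 2 * m / y))
        (3 * m / x ^ 2 * Real.sqrt (1 - 2 * m / x) +
          (1 - 3 * m / x) * ((2 * m / x ^ 2) / (2 * Real.sqrt (1 - 2 * m / x)))) x :=
      (hds x hx).mul (hdw x hx)
    have hnum : HasDerivAt (fun y : ℝ => y ^ 2) (2 * x) x := by
      simpa using hasDerivAt_pow 2 x
    exact hnum.div hden (by have := hsx x hx; have := hwx x hx; positivity)
  -- φ ≤ ν² on [c, ∞)
  have hφν : ∀ x : ℝ, c ≤ x → φ x ≤ (ν x) ^ 2 := by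
    intro x hx
    refine le_of_deriv_le_aux hdφ hν' ?_ (le_of_eq (by rw [hν0])) hx
    intro y hy
    have hy0 := hx0 y hy
    have hs := hsx y hy
    have ht := htx y hy
    have hw := hwx y hy
    have h3m : 3 * m < y := lt_of_lt_of_le hc hy
    rw [hrpow y hy]
    set w : ℝ := Real.sqrt (1 - 2 * m / y) with hwdef
    have hw2 : w ^ 2 = 1 - 2 * m / y := hw2 y hy
    set s : ℝ := 1 - 3 * m / y with hsdef
    rw [← hw2]
    have hsy : s * y = y - 3 * m := by rw [hsdef]; field_simp
    have hyw : w ^ 2 * y = y - 2 * m := by rw [hw2]; field_simp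
    have main : 2 * y * s * w ^ 2 - 3 * m * w ^ 2 - s * m ≤ 2 * y * s ^ 2 := by
      have h4 : y ^ 2 * (2 * y * s * w ^ 2 - 3 * m * w ^ 2 - s * m) ≤ y ^ 2 * (2 * y * s ^ 2) := by
        have lhs_eq : y ^ 2 * (2 * y * s * w ^ 2 - 3 * m * w ^ 2 - s * m) =
            2 * y * ((s * y) * (w ^ 2 * y)) - 3 * m * y * (w ^ 2 * y) - m * y * (s * y) := by ring
        have rhs_eq : y ^ 2 * (2 * y * s ^ 2) = 2 * y * (s * y) ^ 2 := by ring
        rw [lhs_eq, rhs_eq, hsy, hyw]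
        nlinarith [mul_pos hm (show (0:ℝ) < 2 * y - 3 * m by linarith), hy0,
          mul_pos hy0 (mul_pos hm (show (0:ℝ) < 2 * y - 3 * m by linarith))]
      exact le_of_mul_le_mul_left h4 (by positivity)
    rw [div_le_div_iff₀ (by positivity) (by positivity)]
    have lhs_eq : (2 * y * (s * w) -
        y ^ 2 * (3 * m / y ^ 2 * w + s * (2 * m / y ^ 2 / (2 * w)))) * (w ^ 2 * w) =
        (2 * y * s * w ^ 2 - 3 * m * w ^ 2 - s * m) * w ^ 2 := by
      field_simp
      ring
    have rhs_eq : 2 * y * (s * w) ^ 2 = (2 * y * s ^ 2) * w ^ 2 := by ring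
    rw [lhs_eq, rhs_eq]
    exact mul_le_mul_of_nonneg_right main (sq_nonneg w)
  -- the cross inequality: A * √(1-2m/x) ≤ 1 - 3m/x
  have hcross : ∀ x : ℝ, c ≤ x → A * Real.sqrt (1 - 2 * m / x) ≤ 1 - 3 * m / x := by
    intro x hx
    have hx0 := hx0 x hx
    have hs := hsx x hx
    have ht := htx x hx
    have hw := hwx x hx
    have hw2x := hw2 x hx
    have hw2c := hw2 c le_rfl
    have hwc := hwx c le_rfl
    have hsc := hsx c le_rfl
    have htc := htx c le_rfl
    have hsq : (A * Real.sqrt (1 - 2 * m / x)) ^ 2 ≤ (1 - 3 * m / x) ^ 2 := by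
      rw [mul_pow, hw2x, hA, div_pow, hw2c]
      rw [div_mul_eq_mul_div, div_le_iff₀ htc]
      -- (1-3m/c)^2 * (1-2m/x) ≤ (1-3m/x)^2 * (1-2m/c)
      have key : (c - 3*m)^2 * (x - 2*m) * x ≤ (x - 3*m)^2 * (c - 2*m) * c := by
        nlinarith [mul_nonneg (mul_nonneg hm.le (by linarith : (0:ℝ) ≤ x - c))
          (by nlinarith : (0:ℝ) ≤ 4*c*x - 9*m*x - 9*m*c + 18*m^2)]
      have h1 : 1 - 3*m/c = (c - 3*m)/c := by field_simp
      have h2 : 1 - 2*m/x = (x - 2*m)/x := by field_simp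
      have h3 : 1 - 3*m/x = (x - 3*m)/x := by field_simp
      have h4 : 1 - 2*m/c = (c - 2*m)/c := by field_simp
      rw [h1, h2, h3, h4, div_pow, div_pow, div_mul_div_comm, div_mul_div_comm]
      rw [div_le_div_iff₀ (by positivity) (by positivity)]
      nlinarith [mul_le_mul_of_nonneg_right key (mul_nonneg hc0.le hx0.le)]
    nlinarith [mul_pos hA0 hw, hs, hsq]
  -- the upper comparison function ρ
  set ρ : ℝ → ℝ := fun x => x ^ 2 / (A * (1 - 2 * m / x)) with hρdef
  have hdρ : ∀ x : ℝ, c ≤ x → HasDerivAt ρ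
      ((2 * x * (A * (1 - 2 * m / x)) - x ^ 2 * (A * (2 * m / x ^ 2))) /
        (A * (1 - 2 * m / x)) ^ 2) x := by
    intro x hx
    have hden : HasDerivAt (fun y : ℝ => A * (1 - 2 * m / y)) (A * (2 * m / x ^ 2)) x :=
      (hdt x hx).const_mul A
    have hnum : HasDerivAt (fun y : ℝ => y ^ 2) (2 * x) x := by
      simpa using hasDerivAt_pow 2 x
    exact hnum.div hden (by have := htx x hx; positivity)
  -- ν² ≤ ρ on [c, ∞)
  have hνρ : ∀ x : ℝ, c ≤ x → (ν x) ^ 2 ≤ ρ x := by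
    intro x hx
    have h0 : (ν c) ^ 2 = ρ c := by
      have hwc := hwx c le_rfl
      have hw2c := hw2 c le_rfl
      have hsc := hsx c le_rfl
      have htc := htx c le_rfl
      set wc : ℝ := Real.sqrt (1 - 2 * m / c) with hwcdef
      have hden : A * (1 - 2 * m / c) = (1 - 3 * m / c) * wc := by
        rw [hA, ← hw2c]
        field_simp
      rw [hν0, hρdef]
      simp only
      rw [hden]
    refine le_of_deriv_le_aux hν' hdρ ?_ h0.le hx
    intro y hy
    have hy0 := hx0 y hy
    have hs := hsx y hy
    have ht := htx y hy
    have hw := hwx y hy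
    have hw2 := hw2 y hy
    have hcr := hcross y hy
    rw [hrpow y hy]
    set w : ℝ := Real.sqrt (1 - 2 * m / y) with hwdef
    rw [← hw2]
    have hyw : y * w ^ 2 = y - 2 * m := by rw [hw2]; field_simp
    have key : A * y * w ≤ y - 3 * m := by
      have h5 := mul_le_mul_of_nonneg_left hcr hy0.le
      have h3 : y * (1 - 3 * m / y) = y - 3 * m := by field_simp
      nlinarith [h5]
    rw [div_le_div_iff₀ (by positivity) (by positivity)]
    have lhs_eq : (2 * y * (A * w ^ 2) - y ^ 2 * (A * (2 * m / y ^ 2))) * (w ^ 2 * w) =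
        2 * A * (y * w ^ 2 - m) * w ^ 3 := by
      field_simp
    have rhs_eq : 2 * y * (A * w ^ 2) ^ 2 = 2 * A * w ^ 3 * (A * y * w) := by ring
    rw [lhs_eq, rhs_eq, hyw]
    have hfin : 2 * A * w ^ 3 * (A * y * w) ≤ 2 * A * w ^ 3 * (y - 3 * m) :=
      mul_le_mul_of_nonneg_left key (by positivity)
    linarith
  -- conclude
  have hs := hsx r hr
  have ht := htx r hr
  have hw := hwx r hr
  have hw2r := hw2 r hr
  have hr0 := hx0 r hr
  have hφr : 0 < φ r := by
    rw [hφdef]; positivity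
  have hν2 : 0 < (ν r) ^ 2 := lt_of_lt_of_le hφr (hφν r hr)
  constructor
  · -- lower bound
    rw [le_div_iff₀ (by positivity)]
    have h1 := hνρ r hr
    rw [hρdef] at h1
    simp only at h1
    have h2 : A * ((1 - 2 * m / r) * (ν r) ^ 2) ≤
        A * ((1 - 2 * m / r) * (r ^ 2 / (A * (1 - 2 * m / r)))) := by
      apply mul_le_mul_of_nonneg_left _ hA0.le
      exact mul_le_mul_of_nonneg_left h1 ht.le
    calc A * ((1 - 2 * m / r) * (ν r) ^ 2) ≤
        A * ((1 - 2 * m / r) * (r ^ 2 / (A * (1 - 2 * m / r)))) := h2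
      _ = (r ^ 2 / (A * (1 - 2 * m / r))) * (A * (1 - 2 * m / r)) := by ring
      _ = r ^ 2 := div_mul_cancel₀ _ (by positivity)
  · -- upper bound
    rw [div_le_one (by positivity)]
    have h1 := hφν r hr
    rw [hφdef] at h1
    simp only at h1
    -- (1-2m/r) * ν² ≥ (1-2m/r) * φ r = r² * w / (1-3m/r) ≥ r²
    have hsw : 1 - 3 * m / r ≤ Real.sqrt (1 - 2 * m / r) := by
      have : (1 - 3 * m / r) ^ 2 ≤ (Real.sqrt (1 - 2 * m / r)) ^ 2 := by
        rw [hw2r]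
        have h2 : 1 - 3*m/r = (r - 3*m)/r := by field_simp
        have h3 : 1 - 2*m/r = (r - 2*m)/r := by field_simp
        rw [h2, h3, div_pow, div_le_div_iff₀ (by positivity) hr0]
        nlinarith [mul_nonneg hm.le (by linarith : (0:ℝ) ≤ 4*r - 9*m), sq_nonneg m]
      nlinarith [hs, hw]
    have h4 : r ^ 2 ≤ (1 - 2 * m / r) * φ r := by
      rw [hφdef]
      simp only
      set w : ℝ := Real.sqrt (1 - 2 * m / r) with hwdef
      rw [← hw2r, mul_div_assoc', le_div_iff₀ (by positivity)]
      nlinarith [sq_nonneg r, mul_nonneg (sq_nonneg r) (mul_nonneg hw.le (sub_nonneg.2 hsw)),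
        mul_nonneg (mul_nonneg (sq_nonneg r) hw.le) hw.le]
    calc r ^ 2 ≤ (1 - 2 * m / r) * φ r := h4
      _ ≤ (1 - 2 * m / r) * (ν r) ^ 2 := mul_le_mul_of_nonneg_left h1 ht.le
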